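/- arXiv:2110.11034 — 2 statements merged into one kernel-verified Lean document; each statement's English description precedes it below -/
import Mathlib

section
/- Terminating and diverging executions are mutually exclusive: if exec σ s σ' o is derivable (inductively) then the coinductive diverging execution execinf σ s is not derivable. -/
set_option autoImplicit true

def MIN : Int := -2147483648
def MAX : Int := 2147483647

abbrev Store := String → Option Int

def Store.update (x : String) (v : Option Int) (σ : Store) : Store :=
  fun y => if x = y then v else σ y

def emptyStore : Store := fun _ => none

def WellBounded (σ : Store) : Prop := ∀ x z, σ x = some z → MIN ≤ z ∧ z ≤ MAX

def inBounds (z : Int) : Prop := MIN ≤ z ∧ z ≤ MAX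

instance : DecidablePred inBounds := fun z => by unfold inBounds; infer_instance

inductive Expr where
  | tt | ff
  | lit (z : Int)
  | var (x : String)
  | add (e₁ e₂ : Expr)
  | sub (e₁ e₂ : Expr)
  | div (e₁ e₂ : Expr)
  | lt (e₁ e₂ : Expr)
  | le (e₁ e₂ : Expr)
  | eq (e₁ e₂ : Expr)
  | ne (e₁ e₂ : Expr)

def evalZ : Expr → Store → Option Int
  | .lit z, _ => if inBounds z then some z else none
  | .var x, σ => σ x
  | .add e₁ e₂, σ =>
      match evalZ e₁ σ, evalZ e₂ σ with
      | some z₁, some z₂ => if inBounds (z₁ + z₂) then some (z₁ + z₂) else none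
      | _, _ => none
  | .sub e₁ e₂, σ =>
      match evalZ e₁ σ, evalZ e₂ σ with
      | some z₁, some z₂ => if inBounds (z₁ - z₂) then some (z₁ - z₂) else none
      | _, _ => none
  | .div e₁ e₂, σ =>
      match evalZ e₁ σ, evalZ e₂ σ with
      | some z₁, some z₂ =>
          if z₂ ≠ 0 ∧ ¬(z₁ = MIN ∧ z₂ = -1) then some (Int.tdiv z₁ z₂) else none
      | _, _ => none
  | _, _ => none

def evalBool : Expr → Store → Option Bool
  | .tt, _ => some true
  | .ff, _ => some false
  | .lt e₁ e₂, σ =>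
      match evalZ e₁ σ, evalZ e₂ σ with
      | some z₁, some z₂ => some (decide (z₁ < z₂))
      | _, _ => none
  | .le e₁ e₂, σ =>
      match evalZ e₁ σ, evalZ e₂ σ with
      | some z₁, some z₂ => some (decide (z₁ ≤ z₂))
      | _, _ => none
  | .eq e₁ e₂, σ =>
      match evalZ e₁ σ, evalZ e₂ σ with
      | some z₁, some z₂ => some (decide (z₁ = z₂))
      | _, _ => none
  | .ne e₁ e₂, σ =>
      match evalZ e₁ σ, evalZ e₂ σ with
      | some z₁, some z₂ => some (decide (z₁ ≠ z₂))
      | _, _ => none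
  | _, _ => none

inductive Stmt where
  | skip
  | seq (s₁ s₂ : Stmt)
  | letin (x : String) (e : Expr) (s : Stmt)
  | assign (x : String) (e : Expr)
  | ifte (e : Expr) (s₁ s₂ : Stmt)
  | ret (e : Expr)
  | while (c inv : Expr) (s : Stmt)
  | block (s : Stmt)

inductive Outcome where
  | normal
  | ret (z : Int)

inductive Exec : Store → Stmt → Store → Outcome → Prop where
  | skip : Exec σ .skip σ .normal
  | seqN : Exec σ s₁ σ' .normal → Exec σ' s₂ σ'' o → Exec σ (.seq s₁ s₂) σ'' o
  | seqA : Exec σ s₁ σ' o → o ≠ .normal → Exec σ (.seq s₁ s₂) σ' o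
  | letin : σ x = none → evalZ e σ = some z →
      Exec (Store.update x (some z) σ) s σ' o →
      Exec σ (.letin x e s) (Store.update x none σ') o
  | assign : evalZ e σ = some z →
      Exec σ (.assign x e) (Store.update x (some z) σ) .normal
  | ifT : evalBool e σ = some true → Exec σ s₁ σ' o → Exec σ (.ifte e s₁ s₂) σ' o
  | ifF : evalBool e σ = some false → Exec σ s₂ σ' o → Exec σ (.ifte e s₁ s₂) σ' o
  | ret : evalZ e σ = some z → Exec σ (.ret e) σ (.ret z)
  | whileTA : evalBool c σ = some true → Exec σ s σ' o → o ≠ .normal →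
      Exec σ (.while c i s) σ' o
  | whileTN : evalBool c σ = some true → Exec σ s σ' .normal →
      Exec σ' (.while c i s) σ'' o → Exec σ (.while c i s) σ'' o
  | whileF : evalBool c σ = some false → Exec σ (.while c i s) σ .normal
  | block : Exec σ s σ' o → Exec σ (.block s) σ' o

/-- One step of the divergence functional; `Execinf` is its greatest fixpoint,
faithfully encoding the coinductive diverging-execution relation. -/
inductive ExecinfF (R : Store → Stmt → Prop) : Store → Stmt → Prop where
  | seq₁ : R σ s₁ → ExecinfF R σ (.seq s₁ s₂)
  | seq₂ : Exec σ s₁ σ' .normal → R σ' s₂ → ExecinfF R σ (.seq s₁ s₂)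
  | letin : σ x = none → evalZ e σ = some z → R (Store.update x (some z) σ) s →
      ExecinfF R σ (.letin x e s)
  | ifT : evalBool e σ = some true → R σ s₁ → ExecinfF R σ (.ifte e s₁ s₂)
  | ifF : evalBool e σ = some false → R σ s₂ → ExecinfF R σ (.ifte e s₁ s₂)
  | whileBody : evalBool c σ = some true → R σ s → ExecinfF R σ (.while c i s)
  | whileLoop : evalBool c σ = some true → Exec σ s σ' .normal →
      R σ' (.while c i s) → ExecinfF R σ (.while c i s)
  | block : R σ s → ExecinfF R σ (.block s)

def Execinf (σ : Store) (s : Stmt) : Prop :=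
  ∃ R : Store → Stmt → Prop, (∀ σ' s', R σ' s' → ExecinfF R σ' s') ∧ R σ s

theorem exec_det {σ s σ₁ o₁ σ₂ o₂} (h₁ : Exec σ s σ₁ o₁) (h₂ : Exec σ s σ₂ o₂) :
    σ₁ = σ₂ ∧ o₁ = o₂ := by
  induction h₁ generalizing σ₂ o₂ with
  | skip => cases h₂; exact ⟨rfl, rfl⟩
  | seqN ha hb iha ihb =>
    cases h₂ with
    | seqN ha' hb' =>
      obtain ⟨rfl, -⟩ := iha ha'
      exact ihb hb'
    | seqA ha' hne => obtain ⟨-, h⟩ := iha ha'; exact absurd h.symm hne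
  | seqA ha hne iha =>
    cases h₂ with
    | seqN ha' hb' => obtain ⟨-, h⟩ := iha ha'; exact absurd h hne
    | seqA ha' hne' => exact iha ha'
  | letin hn he ha iha =>
    cases h₂ with
    | letin hn' he' ha' =>
      rw [he'] at he; cases he
      obtain ⟨rfl, rfl⟩ := iha ha'
      exact ⟨rfl, rfl⟩
  | assign he =>
    cases h₂ with
    | assign he' => rw [he'] at he; cases he; exact ⟨rfl, rfl⟩
  | ifT he ha iha =>
    cases h₂ with
    | ifT he' ha' => exact iha ha'
    | ifF he' ha' => rw [he'] at he; cases he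
  | ifF he ha iha =>
    cases h₂ with
    | ifT he' ha' => rw [he'] at he; cases he
    | ifF he' ha' => exact iha ha'
  | ret he =>
    cases h₂ with
    | ret he' => rw [he'] at he; cases he; exact ⟨rfl, rfl⟩
  | whileTA hc ha hne iha =>
    cases h₂ with
    | whileTA hc' ha' hne' => exact iha ha'
    | whileTN hc' ha' hw' => obtain ⟨-, h⟩ := iha ha'; exact absurd h hne
    | whileF hc' => rw [hc'] at hc; cases hc
  | whileTN hc ha hw iha ihw =>
    cases h₂ with
    | whileTA hc' ha' hne' => obtain ⟨-, h⟩ := iha ha'; exact absurd h.symm hne'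
    | whileTN hc' ha' hw' => obtain ⟨rfl, -⟩ := iha ha'; exact ihw hw'
    | whileF hc' => rw [hc'] at hc; cases hc
  | whileF hc =>
    cases h₂ with
    | whileTA hc' ha' hne' => rw [hc'] at hc; cases hc
    | whileTN hc' ha' hw' => rw [hc'] at hc; cases hc
    | whileF hc' => exact ⟨rfl, rfl⟩
  | block ha iha =>
    cases h₂ with
    | block ha' => exact iha ha'

theorem exec_not_execinf {σ s σ' o} (h : Exec σ s σ' o) : ¬ Execinf σ s := by
  induction h with
  | skip => rintro ⟨R, hR, hr⟩; cases hR _ _ hr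
  | seqN ha hb iha ihb =>
    rintro ⟨R, hR, hr⟩
    cases hR _ _ hr with
    | seq₁ h1 => exact iha ⟨R, hR, h1⟩
    | seq₂ he h2 =>
      obtain ⟨rfl, -⟩ := exec_det ha he
      exact ihb ⟨R, hR, h2⟩
  | seqA ha hne iha =>
    rintro ⟨R, hR, hr⟩
    cases hR _ _ hr with
    | seq₁ h1 => exact iha ⟨R, hR, h1⟩
    | seq₂ he h2 => obtain ⟨-, h⟩ := exec_det ha he; exact hne h
  | letin hn he ha iha =>
    rintro ⟨R, hR, hr⟩
    cases hR _ _ hr with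
    | letin hn' he' h1 =>
      rw [he'] at he; cases he
      exact iha ⟨R, hR, h1⟩
  | assign he => rintro ⟨R, hR, hr⟩; cases hR _ _ hr
  | ifT he ha iha =>
    rintro ⟨R, hR, hr⟩
    cases hR _ _ hr with
    | ifT he' h1 => exact iha ⟨R, hR, h1⟩
    | ifF he' h1 => rw [he'] at he; cases he
  | ifF he ha iha =>
    rintro ⟨R, hR, hr⟩
    cases hR _ _ hr with
    | ifT he' h1 => rw [he'] at he; cases he
    | ifF he' h1 => exact iha ⟨R, hR, h1⟩
  | ret he => rintro ⟨R, hR, hr⟩; cases hR _ _ hr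
  | whileTA hc ha hne iha =>
    rintro ⟨R, hR, hr⟩
    cases hR _ _ hr with
    | whileBody hc' h1 => exact iha ⟨R, hR, h1⟩
    | whileLoop hc' he h1 => obtain ⟨-, h⟩ := exec_det ha he; exact hne h
  | whileTN hc ha hw iha ihw =>
    rintro ⟨R, hR, hr⟩
    cases hR _ _ hr with
    | whileBody hc' h1 => exact iha ⟨R, hR, h1⟩
    | whileLoop hc' he h1 =>
      obtain ⟨rfl, -⟩ := exec_det ha he
      exact ihw ⟨R, hR, h1⟩
  | whileF hc =>
    rintro ⟨R, hR, hr⟩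
    cases hR _ _ hr with
    | whileBody hc' h1 => rw [hc'] at hc; cases hc
    | whileLoop hc' he h1 => rw [hc'] at hc; cases hc
  | block ha iha =>
    rintro ⟨R, hR, hr⟩
    cases hR _ _ hr with
    | block h1 => exact iha ⟨R, hR, h1⟩
end

section
/- If symbolic execution of statement s from a well-bounded store σ succeeds with normal continuation C_N and return continuation C_R, and a terminating execution exec σ s σ' o is derivable, then C_N σ' holds when o = Normal, and C_R z σ' holds when o = Return z. -/
set_option autoImplicit true

abbrev SCont := Store → Prop

def evalZCps : Expr → (Int → SCont) → SCont
  | .lit z, C, σ => if inBounds z then C z σ else False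
  | .var x, C, σ =>
      match σ x with
      | some z => C z σ
      | none => False
  | .add e₁ e₂, C, σ =>
      evalZCps e₁ (fun z₁ σ => evalZCps e₂ (fun z₂ σ =>
        MIN ≤ z₁ + z₂ ∧ ((z₁ + z₂ ≤ MAX) ∧ C (z₁ + z₂) σ)) σ) σ
  | .sub e₁ e₂, C, σ =>
      evalZCps e₁ (fun z₁ σ => evalZCps e₂ (fun z₂ σ =>
        MIN ≤ z₁ - z₂ ∧ ((z₁ - z₂ ≤ MAX) ∧ C (z₁ - z₂) σ)) σ) σ
  | .div e₁ e₂, C, σ =>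
      evalZCps e₁ (fun z₁ σ => evalZCps e₂ (fun z₂ σ =>
        z₂ ≠ 0 ∧ ((¬(z₁ = MIN ∧ z₂ = -1)) ∧ C (Int.tdiv z₁ z₂) σ)) σ) σ
  | _, _, _ => False

def evalPropCps : Expr → (Prop → SCont) → SCont
  | .tt, C, σ => C True σ
  | .ff, C, σ => C False σ
  | .lt e₁ e₂, C, σ =>
      evalZCps e₁ (fun z₁ σ => evalZCps e₂ (fun z₂ σ => C (z₁ < z₂) σ) σ) σ
  | .le e₁ e₂, C, σ =>
      evalZCps e₁ (fun z₁ σ => evalZCps e₂ (fun z₂ σ => C (z₁ ≤ z₂) σ) σ) σ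
  | .eq e₁ e₂, C, σ =>
      evalZCps e₁ (fun z₁ σ => evalZCps e₂ (fun z₂ σ => C (z₁ = z₂) σ) σ) σ
  | .ne e₁ e₂, C, σ =>
      evalZCps e₁ (fun z₁ σ => evalZCps e₂ (fun z₂ σ => C (z₁ ≠ z₂) σ) σ) σ
  | _, _, _ => False

def translateZ : Expr → (Int → SCont) → SCont
  | .lit z, C, σ => C z σ
  | .var x, C, σ =>
      match σ x with
      | some z => C z σ
      | none => False
  | .add e₁ e₂, C, σ =>
      translateZ e₁ (fun z₁ σ => translateZ e₂ (fun z₂ σ => C (z₁ + z₂) σ) σ) σ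
  | .sub e₁ e₂, C, σ =>
      translateZ e₁ (fun z₁ σ => translateZ e₂ (fun z₂ σ => C (z₁ - z₂) σ) σ) σ
  | .div e₁ e₂, C, σ =>
      translateZ e₁ (fun z₁ σ => translateZ e₂ (fun z₂ σ => C (Int.tdiv z₁ z₂) σ) σ) σ
  | _, _, _ => False

def translateProp : Expr → (Prop → SCont) → SCont
  | .tt, C, σ => C True σ
  | .ff, C, σ => C False σ
  | .lt e₁ e₂, C, σ =>
      translateZ e₁ (fun z₁ σ => translateZ e₂ (fun z₂ σ => C (z₁ < z₂) σ) σ) σ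
  | .le e₁ e₂, C, σ =>
      translateZ e₁ (fun z₁ σ => translateZ e₂ (fun z₂ σ => C (z₁ ≤ z₂) σ) σ) σ
  | .eq e₁ e₂, C, σ =>
      translateZ e₁ (fun z₁ σ => translateZ e₂ (fun z₂ σ => C (z₁ = z₂) σ) σ) σ
  | .ne e₁ e₂, C, σ =>
      translateZ e₁ (fun z₁ σ => translateZ e₂ (fun z₂ σ => C (z₁ ≠ z₂) σ) σ) σ
  | _, _, _ => False

def produce (e : Expr) (C : SCont) : SCont :=
  fun σ => translateProp e (fun E σ' => E → C σ') σ

def consume (e : Expr) (C : SCont) : SCont :=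
  fun σ => translateProp e (fun E σ' => E ∧ C σ') σ

def leakCheck : SCont := fun _ => True

def freeTargets : Stmt → List String
  | .skip => []
  | .seq s₁ s₂ => freeTargets s₁ ++ freeTargets s₂
  | .letin x _ s => (freeTargets s).filter (· != x)
  | .assign x _ => [x]
  | .ifte _ s₁ s₂ => freeTargets s₁ ++ freeTargets s₂
  | .ret _ => []
  | .while _ _ s => freeTargets s
  | .block s => freeTargets s

def havocZs : List String → SCont → SCont
  | [], C, σ => C σ
  | x :: xs, C, σ =>
      σ x ≠ none ∧ ∀ z : Int, MIN ≤ z ∧ z ≤ MAX →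
        havocZs xs C (Store.update x (some z) σ)

def symExecStmt : Stmt → SCont → (Int → SCont) → SCont
  | .skip, CN, _, σ => CN σ
  | .seq s₁ s₂, CN, CR, σ =>
      symExecStmt s₁ (fun σ' => symExecStmt s₂ CN CR σ') CR σ
  | .ret e, _, CR, σ => evalZCps e CR σ
  | .block s, CN, CR, σ => symExecStmt s CN CR σ
  | .letin x e s, CN, CR, σ =>
      match σ x with
      | some _ => False
      | none =>
          evalZCps e (fun z σ' =>
            symExecStmt s (fun σ'' => CN (Store.update x none σ''))
              (fun z' σ'' => CR z' (Store.update x none σ''))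
              (Store.update x (some z) σ')) σ
  | .assign x e, CN, _, σ =>
      evalZCps e (fun z σ' => CN (Store.update x (some z) σ')) σ
  | .ifte e s₁ s₂, CN, CR, σ =>
      evalPropCps e (fun E σ' =>
        (E → symExecStmt s₁ CN CR σ') ∧ (¬E → symExecStmt s₂ CN CR σ')) σ
  | .while c i s, CN, CR, σ =>
      consume i (havocZs (freeTargets s) (produce i (fun σ' =>
        evalPropCps c (fun E σ'' =>
          (E → symExecStmt s (consume i leakCheck) CR σ'') ∧
          (¬E → CN σ'')) σ'))) σ

set_option maxHeartbeats 1000000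

lemma div_bounds {z₁ z₂ : Int} (h1 : MIN ≤ z₁ ∧ z₁ ≤ MAX) (h2 : MIN ≤ z₂ ∧ z₂ ≤ MAX)
    (hz : z₂ ≠ 0) (hne : ¬(z₁ = MIN ∧ z₂ = -1)) :
    MIN ≤ Int.tdiv z₁ z₂ ∧ Int.tdiv z₁ z₂ ≤ MAX := by
  rcases eq_or_ne z₂ 1 with rfl | h1'
  · rw [show Int.tdiv z₁ 1 = z₁ from Int.tdiv_one z₁]; exact h1
  rcases eq_or_ne z₂ (-1) with rfl | hm1
  · have : z₁ ≠ MIN := fun h => hne ⟨h, rfl⟩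
    have heq : Int.tdiv z₁ (-1) = -z₁ := by
      show Int.tdiv z₁ (-1) = -z₁
      rw [show (-1 : Int) = -(1:Int) from rfl, Int.tdiv_neg, Int.tdiv_one]
    rw [heq]; unfold MIN MAX at *; omega
  · have habs : (Int.tdiv z₁ z₂).natAbs = z₁.natAbs / z₂.natAbs := Int.natAbs_tdiv z₁ z₂
    have h2' : 2 ≤ z₂.natAbs := by unfold MIN MAX at *; omega
    have hle : z₁.natAbs / z₂.natAbs ≤ z₁.natAbs / 2 :=
      Nat.div_le_div_left h2' (by norm_num)
    have : z₁.natAbs / 2 ≤ 2147483648 / 2 := Nat.div_le_div_right (by unfold MIN MAX at *; omega)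
    unfold MIN MAX at *; omega

lemma evalZ_bounds : ∀ (e : Expr) {σ : Store} {z : Int}, WellBounded σ →
    evalZ e σ = some z → MIN ≤ z ∧ z ≤ MAX := by
  intro e
  induction e with
  | lit w => intro σ z hwb h; unfold evalZ at h; split at h <;> simp_all [inBounds]
  | var x => intro σ z hwb h; exact hwb x z h
  | add e₁ e₂ ih₁ ih₂ =>
    intro σ z hwb h; unfold evalZ at h
    rcases he₁ : evalZ e₁ σ with _ | z₁ <;> rcases he₂ : evalZ e₂ σ with _ | z₂ <;>
      simp [he₁, he₂] at h
    obtain ⟨hb, rfl⟩ := h; exact hb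
  | sub e₁ e₂ ih₁ ih₂ =>
    intro σ z hwb h; unfold evalZ at h
    rcases he₁ : evalZ e₁ σ with _ | z₁ <;> rcases he₂ : evalZ e₂ σ with _ | z₂ <;>
      simp [he₁, he₂] at h
    obtain ⟨hb, rfl⟩ := h; exact hb
  | div e₁ e₂ ih₁ ih₂ =>
    intro σ z hwb h; unfold evalZ at h
    rcases he₁ : evalZ e₁ σ with _ | z₁ <;> rcases he₂ : evalZ e₂ σ with _ | z₂ <;>
      simp [he₁, he₂] at h
    obtain ⟨⟨h0, hm⟩, rfl⟩ := h
    exact div_bounds (ih₁ hwb he₁) (ih₂ hwb he₂) h0 (by rintro ⟨rfl, rfl⟩; exact hm rfl rfl)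
  | _ => intro σ z hwb h; simp [evalZ] at h

lemma evalZCps_sound : ∀ (e : Expr) (C : Int → SCont) (σ : Store),
    evalZCps e C σ → ∃ z, evalZ e σ = some z ∧ C z σ := by
  intro e
  induction e with
  | lit w =>
    intro C σ h; unfold evalZCps at h; split at h
    · exact ⟨w, by simp [evalZ, *], h⟩
    · exact absurd h (by simp)
  | var x =>
    intro C σ h; unfold evalZCps at h
    rcases hx : σ x with _ | z <;> simp [hx] at h
    exact ⟨z, by simp [evalZ, hx], h⟩
  | add e₁ e₂ ih₁ ih₂ =>
    intro C σ h; unfold evalZCps at h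
    obtain ⟨z₁, he₁, h⟩ := ih₁ _ _ h
    obtain ⟨z₂, he₂, hb₁, hb₂, hC⟩ := ih₂ _ _ h
    exact ⟨z₁ + z₂, by simp [evalZ, he₁, he₂, inBounds, hb₁, hb₂], hC⟩
  | sub e₁ e₂ ih₁ ih₂ =>
    intro C σ h; unfold evalZCps at h
    obtain ⟨z₁, he₁, h⟩ := ih₁ _ _ h
    obtain ⟨z₂, he₂, hb₁, hb₂, hC⟩ := ih₂ _ _ h
    exact ⟨z₁ - z₂, by simp [evalZ, he₁, he₂, inBounds, hb₁, hb₂], hC⟩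
  | div e₁ e₂ ih₁ ih₂ =>
    intro C σ h; unfold evalZCps at h
    obtain ⟨z₁, he₁, h⟩ := ih₁ _ _ h
    obtain ⟨z₂, he₂, hb₁, hb₂, hC⟩ := ih₂ _ _ h
    refine ⟨Int.tdiv z₁ z₂, ?_, hC⟩
    simp [evalZ, he₁, he₂]
    exact ⟨hb₁, fun h1 h2 => hb₂ ⟨h1, h2⟩⟩
  | _ => intro C σ h; simp [evalZCps] at h

lemma evalPropCps_sound : ∀ (e : Expr) (C : Prop → SCont) (σ : Store),
    evalPropCps e C σ → ∃ (P : Prop) (b : Bool), evalBool e σ = some b ∧ (P ↔ b = true) ∧ C P σ := by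
  intro e
  induction e with
  | tt => intro C σ h; exact ⟨True, true, rfl, by simp, h⟩
  | ff => intro C σ h; exact ⟨False, false, rfl, by simp, h⟩
  | lt e₁ e₂ ih₁ ih₂ =>
    intro C σ h; unfold evalPropCps at h
    obtain ⟨z₁, he₁, h⟩ := evalZCps_sound _ _ _ h
    obtain ⟨z₂, he₂, hC⟩ := evalZCps_sound _ _ _ h
    exact ⟨z₁ < z₂, decide (z₁ < z₂), by simp [evalBool, he₁, he₂], by simp, hC⟩
  | le e₁ e₂ ih₁ ih₂ =>
    intro C σ h; unfold evalPropCps at h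
    obtain ⟨z₁, he₁, h⟩ := evalZCps_sound _ _ _ h
    obtain ⟨z₂, he₂, hC⟩ := evalZCps_sound _ _ _ h
    exact ⟨z₁ ≤ z₂, decide (z₁ ≤ z₂), by simp [evalBool, he₁, he₂], by simp, hC⟩
  | eq e₁ e₂ ih₁ ih₂ =>
    intro C σ h; unfold evalPropCps at h
    obtain ⟨z₁, he₁, h⟩ := evalZCps_sound _ _ _ h
    obtain ⟨z₂, he₂, hC⟩ := evalZCps_sound _ _ _ h
    exact ⟨z₁ = z₂, decide (z₁ = z₂), by simp [evalBool, he₁, he₂], by simp, hC⟩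
  | ne e₁ e₂ ih₁ ih₂ =>
    intro C σ h; unfold evalPropCps at h
    obtain ⟨z₁, he₁, h⟩ := evalZCps_sound _ _ _ h
    obtain ⟨z₂, he₂, hC⟩ := evalZCps_sound _ _ _ h
    exact ⟨z₁ ≠ z₂, decide (z₁ ≠ z₂), by simp [evalBool, he₁, he₂], by simp, hC⟩
  | _ => intro C σ h; simp [evalPropCps] at h

def tZ : Expr → Store → Option Int
  | .lit z, _ => some z
  | .var x, σ => σ x
  | .add e₁ e₂, σ =>
      match tZ e₁ σ, tZ e₂ σ with
      | some z₁, some z₂ => some (z₁ + z₂) | _, _ => none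
  | .sub e₁ e₂, σ =>
      match tZ e₁ σ, tZ e₂ σ with
      | some z₁, some z₂ => some (z₁ - z₂) | _, _ => none
  | .div e₁ e₂, σ =>
      match tZ e₁ σ, tZ e₂ σ with
      | some z₁, some z₂ => some (Int.tdiv z₁ z₂) | _, _ => none
  | _, _ => none

def tP : Expr → Store → Option Prop
  | .tt, _ => some True
  | .ff, _ => some False
  | .lt e₁ e₂, σ =>
      match tZ e₁ σ, tZ e₂ σ with
      | some z₁, some z₂ => some (z₁ < z₂) | _, _ => none
  | .le e₁ e₂, σ =>
      match tZ e₁ σ, tZ e₂ σ with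
      | some z₁, some z₂ => some (z₁ ≤ z₂) | _, _ => none
  | .eq e₁ e₂, σ =>
      match tZ e₁ σ, tZ e₂ σ with
      | some z₁, some z₂ => some (z₁ = z₂) | _, _ => none
  | .ne e₁ e₂, σ =>
      match tZ e₁ σ, tZ e₂ σ with
      | some z₁, some z₂ => some (z₁ ≠ z₂) | _, _ => none
  | _, _ => none

lemma translateZ_sound : ∀ (e : Expr) (C : Int → SCont) (σ : Store),
    translateZ e C σ → ∃ z, tZ e σ = some z ∧ C z σ := by
  intro e
  induction e with
  | lit w => intro C σ h; exact ⟨w, rfl, h⟩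
  | var x =>
    intro C σ h; unfold translateZ at h
    rcases hx : σ x with _ | z <;> simp [hx] at h
    exact ⟨z, by simp [tZ, hx], h⟩
  | add e₁ e₂ ih₁ ih₂ =>
    intro C σ h; unfold translateZ at h
    obtain ⟨z₁, he₁, h⟩ := ih₁ _ _ h
    obtain ⟨z₂, he₂, hC⟩ := ih₂ _ _ h
    exact ⟨z₁ + z₂, by simp [tZ, he₁, he₂], hC⟩
  | sub e₁ e₂ ih₁ ih₂ =>
    intro C σ h; unfold translateZ at h
    obtain ⟨z₁, he₁, h⟩ := ih₁ _ _ h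
    obtain ⟨z₂, he₂, hC⟩ := ih₂ _ _ h
    exact ⟨z₁ - z₂, by simp [tZ, he₁, he₂], hC⟩
  | div e₁ e₂ ih₁ ih₂ =>
    intro C σ h; unfold translateZ at h
    obtain ⟨z₁, he₁, h⟩ := ih₁ _ _ h
    obtain ⟨z₂, he₂, hC⟩ := ih₂ _ _ h
    exact ⟨Int.tdiv z₁ z₂, by simp [tZ, he₁, he₂], hC⟩
  | _ => intro C σ h; simp [translateZ] at h

lemma translateProp_sound : ∀ (e : Expr) (C : Prop → SCont) (σ : Store),
    translateProp e C σ → ∃ P, tP e σ = some P ∧ C P σ := by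
  intro e
  cases e with
  | tt => intro C σ h; exact ⟨True, rfl, h⟩
  | ff => intro C σ h; exact ⟨False, rfl, h⟩
  | lt e₁ e₂ =>
    intro C σ h; unfold translateProp at h
    obtain ⟨z₁, he₁, h⟩ := translateZ_sound _ _ _ h
    obtain ⟨z₂, he₂, hC⟩ := translateZ_sound _ _ _ h
    exact ⟨z₁ < z₂, by simp [tP, he₁, he₂], hC⟩
  | le e₁ e₂ =>
    intro C σ h; unfold translateProp at h
    obtain ⟨z₁, he₁, h⟩ := translateZ_sound _ _ _ h
    obtain ⟨z₂, he₂, hC⟩ := translateZ_sound _ _ _ h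
    exact ⟨z₁ ≤ z₂, by simp [tP, he₁, he₂], hC⟩
  | eq e₁ e₂ =>
    intro C σ h; unfold translateProp at h
    obtain ⟨z₁, he₁, h⟩ := translateZ_sound _ _ _ h
    obtain ⟨z₂, he₂, hC⟩ := translateZ_sound _ _ _ h
    exact ⟨z₁ = z₂, by simp [tP, he₁, he₂], hC⟩
  | ne e₁ e₂ =>
    intro C σ h; unfold translateProp at h
    obtain ⟨z₁, he₁, h⟩ := translateZ_sound _ _ _ h
    obtain ⟨z₂, he₂, hC⟩ := translateZ_sound _ _ _ h
    exact ⟨z₁ ≠ z₂, by simp [tP, he₁, he₂], hC⟩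
  | _ => intro C σ h; simp [translateProp] at h

lemma exec_dom {σ s σ' o} (h : Exec σ s σ' o) : ∀ x, σ' x = none → σ x = none := by
  induction h with
  | skip => intro x h; exact h
  | seqN _ _ ih₁ ih₂ => intro x hx; exact ih₁ x (ih₂ x hx)
  | seqA _ _ ih => exact ih
  | letin hx he hb ih =>
    rename_i σ₀ e₀ z₀ x₀ s₀ σ₀' o₀
    intro y hy
    by_cases hxy : x₀ = y
    · subst hxy; exact hx
    · simp [Store.update, hxy] at hy
      have := ih y hy
      simpa [Store.update, hxy] using this
  | assign he =>
    rename_i e₀ σ₀ z₀ x₀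
    intro y hy
    by_cases hxy : x₀ = y
    · subst hxy; simp [Store.update] at hy
    · simpa [Store.update, hxy] using hy
  | ifT _ _ ih => exact ih
  | ifF _ _ ih => exact ih
  | ret _ => intro x h; exact h
  | whileTA _ _ _ ih => exact ih
  | whileTN _ _ _ ih₁ ih₂ => intro x hx; exact ih₁ x (ih₂ x hx)
  | whileF _ => intro x h; exact h
  | block _ ih => exact ih

lemma exec_frame {σ s σ' o} (h : Exec σ s σ' o) :
    ∀ x, x ∉ freeTargets s → σ' x = σ x := by
  induction h with
  | skip => intro x _; rfl
  | seqN _ _ ih₁ ih₂ =>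
    intro x hx; simp [freeTargets] at hx
    rw [ih₂ x hx.2, ih₁ x hx.1]
  | seqA _ _ ih =>
    intro x hx; simp [freeTargets] at hx; exact ih x hx.1
  | letin hx he hb ih =>
    rename_i σ₀ e₀ z₀ x₀ s₀ σ₀' o₀
    intro y hy
    simp [freeTargets, List.mem_filter] at hy
    by_cases hxy : x₀ = y
    · subst hxy; simp [Store.update, hx]
    · simp [Store.update, hxy]
      rw [ih y (by intro hc; exact hxy (hy hc).symm)]
      simp [Store.update, hxy]
  | assign he =>
    rename_i e₀ σ₀ z₀ x₀
    intro y hy; simp [freeTargets] at hy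
    simp [Store.update, Ne.symm hy]
  | ifT _ _ ih =>
    intro x hx; simp [freeTargets] at hx; exact ih x hx.1
  | ifF _ _ ih =>
    intro x hx; simp [freeTargets] at hx; exact ih x hx.2
  | ret _ => intro x _; rfl
  | whileTA _ _ _ ih => intro x hx; exact ih x hx
  | whileTN _ _ _ ih₁ ih₂ =>
    intro x hx; rw [ih₂ x hx, ih₁ x hx]
  | whileF _ => intro x _; rfl
  | block _ ih => exact ih

lemma wb_update {σ : Store} {x z} (hwb : WellBounded σ) (hz : MIN ≤ z ∧ z ≤ MAX) :
    WellBounded (Store.update x (some z) σ) := by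
  intro y w hy
  by_cases hxy : x = y
  · subst hxy; simp [Store.update] at hy; subst hy; exact hz
  · simp [Store.update, hxy] at hy; exact hwb y w hy

lemma wb_update_none {σ : Store} {x} (hwb : WellBounded σ) :
    WellBounded (Store.update x none σ) := by
  intro y w hy
  by_cases hxy : x = y
  · subst hxy; simp [Store.update] at hy
  · simp [Store.update, hxy] at hy; exact hwb y w hy

lemma exec_wb {σ s σ' o} (h : Exec σ s σ' o) (hwb : WellBounded σ) : WellBounded σ' := by
  induction h with
  | skip => exact hwb
  | seqN _ _ ih₁ ih₂ => exact ih₂ (ih₁ hwb)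
  | seqA _ _ ih => exact ih hwb
  | letin hx he _ ih =>
    exact wb_update_none (ih (wb_update hwb (evalZ_bounds _ hwb he)))
  | assign he => exact wb_update hwb (evalZ_bounds _ hwb he)
  | ifT _ _ ih => exact ih hwb
  | ifF _ _ ih => exact ih hwb
  | ret _ => exact hwb
  | whileTA _ _ _ ih => exact ih hwb
  | whileTN _ _ _ ih₁ ih₂ => exact ih₂ (ih₁ hwb)
  | whileF _ => exact hwb
  | block _ ih => exact ih hwb

lemma havoc_restart : ∀ (xs : List String) (K : SCont) (σ σ₁ : Store),
    havocZs xs K σ → (∀ x, σ₁ x = none → σ x = none) → (∀ x, x ∉ xs → σ₁ x = σ x) →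
    havocZs xs K σ₁ := by
  intro xs
  induction xs with
  | nil =>
    intro K σ σ₁ h _ hag
    have : σ₁ = σ := funext fun x => hag x (by simp)
    rw [this]; exact h
  | cons x xs ih =>
    intro K σ σ₁ h hdom hag
    obtain ⟨hne, h⟩ := h
    refine ⟨fun hc => hne (hdom x hc), fun z hz => ?_⟩
    refine ih K _ _ (h z hz) ?_ ?_
    · intro y hy
      by_cases hxy : x = y
      · subst hxy; simp [Store.update] at hy
      · simp [Store.update, hxy] at hy ⊢; exact hdom y hy
    · intro y hy
      by_cases hxy : x = y
      · simp [Store.update, hxy]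
      · simp [Store.update, hxy]
        exact hag y (by simp [hy, Ne.symm hxy])

lemma havoc_elim : ∀ (xs : List String) (K : SCont) (σ : Store),
    WellBounded σ → havocZs xs K σ → K σ := by
  intro xs
  induction xs with
  | nil => intro K σ _ h; exact h
  | cons x xs ih =>
    intro K σ hwb h
    obtain ⟨hne, h⟩ := h
    rcases hx : σ x with _ | z
    · exact absurd hx hne
    · have hid : Store.update x (some z) σ = σ := by
        funext y; by_cases hxy : x = y <;> simp [Store.update, hxy]
        subst hxy; exact hx.symm
      have := h z (hwb x z hx)
      rw [hid] at this
      exact ih K σ hwb this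

lemma translateZ_complete : ∀ (e : Expr) (C : Int → SCont) (σ : Store) (z : Int),
    tZ e σ = some z → C z σ → translateZ e C σ := by
  intro e
  induction e with
  | lit w => intro C σ z hz hC; cases hz; exact hC
  | var x =>
    intro C σ z hz hC
    unfold tZ at hz
    unfold translateZ; rw [hz]; exact hC
  | add e₁ e₂ ih₁ ih₂ =>
    intro C σ z hz hC
    unfold tZ at hz
    rcases he₁ : tZ e₁ σ with _ | z₁ <;> rcases he₂ : tZ e₂ σ with _ | z₂ <;>
      simp [he₁, he₂] at hz
    subst hz
    exact ih₁ _ _ _ he₁ (ih₂ _ _ _ he₂ hC)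
  | sub e₁ e₂ ih₁ ih₂ =>
    intro C σ z hz hC
    unfold tZ at hz
    rcases he₁ : tZ e₁ σ with _ | z₁ <;> rcases he₂ : tZ e₂ σ with _ | z₂ <;>
      simp [he₁, he₂] at hz
    subst hz
    exact ih₁ _ _ _ he₁ (ih₂ _ _ _ he₂ hC)
  | div e₁ e₂ ih₁ ih₂ =>
    intro C σ z hz hC
    unfold tZ at hz
    rcases he₁ : tZ e₁ σ with _ | z₁ <;> rcases he₂ : tZ e₂ σ with _ | z₂ <;>
      simp [he₁, he₂] at hz
    subst hz
    exact ih₁ _ _ _ he₁ (ih₂ _ _ _ he₂ hC)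
  | _ => intro C σ z hz; simp [tZ] at hz

lemma translateProp_complete : ∀ (e : Expr) (C : Prop → SCont) (σ : Store) (P : Prop),
    tP e σ = some P → C P σ → translateProp e C σ := by
  intro e
  cases e with
  | tt => intro C σ P hP hC; cases hP; exact hC
  | ff => intro C σ P hP hC; cases hP; exact hC
  | lt e₁ e₂ =>
    intro C σ P hP hC
    have hP : (match tZ e₁ σ, tZ e₂ σ with
        | some z₁, some z₂ => some (z₁ < z₂ : Prop) | _, _ => none) = some P := hP
    rcases he₁ : tZ e₁ σ with _ | z₁ <;> rcases he₂ : tZ e₂ σ with _ | z₂ <;>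
        rw [he₁, he₂] at hP
    · exact nomatch hP
    · exact nomatch hP
    · exact nomatch hP
    · injection hP with hP; subst hP
      exact translateZ_complete _ _ _ _ he₁ (translateZ_complete _ _ _ _ he₂ hC)
  | le e₁ e₂ =>
    intro C σ P hP hC
    have hP : (match tZ e₁ σ, tZ e₂ σ with
        | some z₁, some z₂ => some (z₁ ≤ z₂ : Prop) | _, _ => none) = some P := hP
    rcases he₁ : tZ e₁ σ with _ | z₁ <;> rcases he₂ : tZ e₂ σ with _ | z₂ <;>
        rw [he₁, he₂] at hP
    · exact nomatch hP
    · exact nomatch hP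
    · exact nomatch hP
    · injection hP with hP; subst hP
      exact translateZ_complete _ _ _ _ he₁ (translateZ_complete _ _ _ _ he₂ hC)
  | eq e₁ e₂ =>
    intro C σ P hP hC
    have hP : (match tZ e₁ σ, tZ e₂ σ with
        | some z₁, some z₂ => some (z₁ = z₂ : Prop) | _, _ => none) = some P := hP
    rcases he₁ : tZ e₁ σ with _ | z₁ <;> rcases he₂ : tZ e₂ σ with _ | z₂ <;>
        rw [he₁, he₂] at hP
    · exact nomatch hP
    · exact nomatch hP
    · exact nomatch hP
    · injection hP with hP; subst hP
      exact translateZ_complete _ _ _ _ he₁ (translateZ_complete _ _ _ _ he₂ hC)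
  | ne e₁ e₂ =>
    intro C σ P hP hC
    have hP : (match tZ e₁ σ, tZ e₂ σ with
        | some z₁, some z₂ => some (z₁ ≠ z₂ : Prop) | _, _ => none) = some P := hP
    rcases he₁ : tZ e₁ σ with _ | z₁ <;> rcases he₂ : tZ e₂ σ with _ | z₂ <;>
        rw [he₁, he₂] at hP
    · exact nomatch hP
    · exact nomatch hP
    · exact nomatch hP
    · injection hP with hP; subst hP
      exact translateZ_complete _ _ _ _ he₁ (translateZ_complete _ _ _ _ he₂ hC)
  | _ => intro C σ P hP; simp [tP] at hP

theorem symExecStmt_sound_termination {s : Stmt} {CN : SCont} {CR : Int → SCont}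
    {σ σ' : Store} {o : Outcome}
    (hwb : WellBounded σ) (hsym : symExecStmt s CN CR σ)
    (hexec : Exec σ s σ' o) :
    (o = .normal → CN σ') ∧ (∀ z, o = .ret z → CR z σ') := by
  revert hwb hsym
  induction hexec generalizing CN CR with
  | skip => intro hwb hsym; exact ⟨(fun _ => hsym), fun z h => nomatch h⟩
  | seqN h1 h2 ih₁ ih₂ =>
    intro hwb hsym
    simp only [symExecStmt] at hsym
    have hA := (ih₁ hwb hsym).1 rfl
    exact ih₂ (exec_wb h1 hwb) hA
  | seqA h1 hne ih =>
    intro hwb hsym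
    simp only [symExecStmt] at hsym
    exact ⟨fun ho => absurd ho hne, (ih hwb hsym).2⟩
  | letin hx he hb ih =>
    intro hwb hsym
    simp only [symExecStmt] at hsym
    rw [hx] at hsym
    obtain ⟨z', hez', hsym'⟩ := evalZCps_sound _ _ _ hsym
    rw [he] at hez'; injection hez' with hzz; subst hzz
    exact ih (wb_update hwb (evalZ_bounds _ hwb he)) hsym'
  | assign he =>
    intro hwb hsym
    simp only [symExecStmt] at hsym
    obtain ⟨z', hez', hsym'⟩ := evalZCps_sound _ _ _ hsym
    rw [he] at hez'; injection hez' with hzz; subst hzz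
    exact ⟨(fun _ => hsym'), fun z h => nomatch h⟩
  | ifT hbv hex ih =>
    intro hwb hsym
    simp only [symExecStmt] at hsym
    obtain ⟨P, b, hbe, hPb, hC⟩ := evalPropCps_sound _ _ _ hsym
    rw [hbv] at hbe; injection hbe with hb; subst hb
    exact ih hwb (hC.1 (hPb.mpr rfl))
  | ifF hbv hex ih =>
    intro hwb hsym
    simp only [symExecStmt] at hsym
    obtain ⟨P, b, hbe, hPb, hC⟩ := evalPropCps_sound _ _ _ hsym
    rw [hbv] at hbe; injection hbe with hb; subst hb
    exact ih hwb (hC.2 (fun hp => absurd (hPb.mp hp) (by simp)))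
  | ret he =>
    intro hwb hsym
    simp only [symExecStmt] at hsym
    obtain ⟨z', hez', hsym'⟩ := evalZCps_sound _ _ _ hsym
    rw [he] at hez'; injection hez' with hzz; subst hzz
    exact ⟨(fun h => nomatch h), fun w hw => by cases hw; exact hsym'⟩
  | whileTA hc hbody hne ih =>
    intro hwb hsym
    simp only [symExecStmt] at hsym
    unfold consume at hsym
    obtain ⟨P, htP, hPtrue, hhav⟩ := translateProp_sound _ _ _ hsym
    have hprod := havoc_elim _ _ _ hwb hhav
    unfold produce at hprod
    obtain ⟨P', htP', hQ⟩ := translateProp_sound _ _ _ hprod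
    rw [htP] at htP'; injection htP' with hPP; subst hPP
    obtain ⟨E, b, hbe, hEb, hCC⟩ := evalPropCps_sound _ _ _ (hQ hPtrue)
    rw [hc] at hbe; injection hbe with hb; subst hb
    have hsymS := hCC.1 (hEb.mpr rfl)
    exact ⟨fun ho => absurd ho hne, (ih hwb hsymS).2⟩
  | whileTN hc hbody hrest ih_body ih_rest =>
    intro hwb hsym
    simp only [symExecStmt] at hsym
    unfold consume at hsym
    obtain ⟨P, htP, hPtrue, hhav⟩ := translateProp_sound _ _ _ hsym
    have hprod := havoc_elim _ _ _ hwb hhav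
    unfold produce at hprod
    obtain ⟨P', htP', hQ⟩ := translateProp_sound _ _ _ hprod
    rw [htP] at htP'; injection htP' with hPP; subst hPP
    obtain ⟨E, b, hbe, hEb, hCC⟩ := evalPropCps_sound _ _ _ (hQ hPtrue)
    rw [hc] at hbe; injection hbe with hb; subst hb
    have hsymS := hCC.1 (hEb.mpr rfl)
    have hcons := (ih_body hwb hsymS).1 rfl
    unfold consume at hcons
    obtain ⟨P₁, htP₁, hP₁, _⟩ := translateProp_sound _ _ _ hcons
    have hwb₁ := exec_wb hbody hwb
    have hhav₁ := havoc_restart _ _ _ _ hhav (exec_dom hbody) (exec_frame hbody)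
    refine ih_rest hwb₁ ?_
    simp only [symExecStmt]
    unfold consume
    exact translateProp_complete _ _ _ _ htP₁ ⟨hP₁, hhav₁⟩
  | whileF hc =>
    intro hwb hsym
    simp only [symExecStmt] at hsym
    unfold consume at hsym
    obtain ⟨P, htP, hPtrue, hhav⟩ := translateProp_sound _ _ _ hsym
    have hprod := havoc_elim _ _ _ hwb hhav
    unfold produce at hprod
    obtain ⟨P', htP', hQ⟩ := translateProp_sound _ _ _ hprod
    rw [htP] at htP'; injection htP' with hPP; subst hPP
    obtain ⟨E, b, hbe, hEb, hCC⟩ := evalPropCps_sound _ _ _ (hQ hPtrue)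
    rw [hc] at hbe; injection hbe with hb; subst hb
    have hCN := hCC.2 (fun hp => absurd (hEb.mp hp) (by simp))
    exact ⟨(fun _ => hCN), fun z h => nomatch h⟩
  | block hex ih =>
    intro hwb hsym
    simp only [symExecStmt] at hsym
    exact ih hwb hsym
end
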